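/- For all integers a ≥ 1 and n ≥ 1, the alternating sum ∑_{k=0}^{n} (−1)^k · C(n,k) · C(an+1+k, (a−1)n+1+k)/(an+1+k) equals 0 (as a rational number). -/

import Mathlib

open Finset

lemma diff_step (n : ℕ) (f : ℕ → ℚ) :
    ∑ k ∈ range (n + 2), (-1:ℚ)^k * ((n+1).choose k) * f k
      = ∑ k ∈ range (n + 1), (-1:ℚ)^k * (n.choose k) * (f k - f (k+1)) := by
  rw [Finset.sum_range_succ' _ (n+1)]
  simp only [Nat.choose_succ_succ, Nat.cast_add, pow_succ, mul_sub]
  rw [Finset.sum_sub_distrib]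
  have h1 : ∑ k ∈ range (n+1), (-1:ℚ)^k * (n.choose k) * f k
      = f 0 + ∑ k ∈ range (n+1), -((-1:ℚ)^k * (n.choose (k+1)) * f (k+1)) := by
    rw [Finset.sum_range_succ' _ n]
    rw [Finset.sum_range_succ (fun k => -((-1:ℚ)^k * (n.choose (k+1)) * f (k+1)))]
    simp [Nat.choose_succ_self, pow_succ]
    ring_nf
  rw [h1]
  have h2 : ∑ x ∈ range (n+1), (-1:ℚ)^x * -1 * ((n.choose x : ℚ) + (n.choose (x+1) : ℚ)) * f (x+1)
      = ∑ k ∈ range (n+1), (-((-1:ℚ)^k * (n.choose (k+1)) * f (k+1)) - (-1:ℚ)^k * (n.choose k) * f (k+1)) := by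
    apply Finset.sum_congr rfl; intro k _; ring
  rw [h2, Finset.sum_sub_distrib]
  simp
  ring

lemma key (n : ℕ) : ∀ m r : ℕ, r < n →
    ∑ k ∈ range (n + 1), (-1:ℚ)^k * (n.choose k) * ((m + k).choose r) = 0 := by
  induction n with
  | zero => intro m r hr; omega
  | succ n ih =>
    intro m r hr
    rw [show n + 1 + 1 = n + 2 from rfl, diff_step n (fun k => (((m + k).choose r : ℚ)))]
    match r with
    | 0 => simp
    | s + 1 =>
      have : ∑ k ∈ range (n + 1), (-1:ℚ)^k * (n.choose k) *
          (((m + k).choose (s+1) : ℚ) - ((m + (k+1)).choose (s+1) : ℚ))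
          = ∑ k ∈ range (n + 1), -((-1:ℚ)^k * (n.choose k) * ((m + k).choose s : ℚ)) := by
        apply Finset.sum_congr rfl
        intro k _
        have : (m + (k+1)).choose (s+1) = (m + k).choose s + (m + k).choose (s+1) := by
          rw [show m + (k+1) = (m + k) + 1 from rfl, Nat.choose_succ_succ]
        rw [this]
        push_cast
        ring
      rw [this, Finset.sum_neg_distrib, ih m s (by omega), neg_zero]

theorem stmt_6 (a n : ℕ) (ha : 1 ≤ a) (hn : 1 ≤ n) :
    ∑ k ∈ Finset.range (n + 1),
      (-1 : ℚ) ^ k * (n.choose k : ℚ) *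
        ((a * n + 1 + k).choose ((a - 1) * n + 1 + k) : ℚ) / (a * n + 1 + k) = 0 := by
  obtain ⟨b, rfl⟩ : ∃ b, a = b + 1 := ⟨a - 1, by omega⟩
  obtain ⟨m, rfl⟩ : ∃ m, n = m + 1 := ⟨n - 1, by omega⟩
  push_cast
  have hrw : ∀ k ∈ range (m + 1 + 1),
      (-1 : ℚ) ^ k * ((m+1).choose k : ℚ) *
        (((b+1) * (m+1) + 1 + k).choose (b * (m+1) + 1 + k) : ℚ)
          / (((b:ℚ)+1) * ((m:ℚ)+1) + 1 + (k:ℚ))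
      = ((-1:ℚ)^k * ((m+1).choose k) * (((b*(m+1)+m+1) + k).choose m : ℚ)) * (1 / ((m:ℚ)+1)) := by
    intro k _
    set c := b * (m+1) with hc
    have e2 : (b+1) * (m+1) + 1 + k = (c + m + 1 + k) + 1 := by rw [hc]; ring
    have hle : m + 1 ≤ (c + m + 1 + k) + 1 := by omega
    have e3 : ((c + m + 1 + k) + 1) - (m+1) = c + 1 + k := by omega
    have hsym : (((b+1) * (m+1) + 1 + k)).choose (c + 1 + k)
        = ((c + m + 1 + k) + 1).choose (m+1) := by
      rw [e2, ← Nat.choose_symm hle, e3]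
    have e4 : (b*(m+1)+m+1) + k = c + m + 1 + k := by rw [hc]
    have e4' : c + 1 + k = c + m + 1 + k - m := by omega
    rw [show b * (m+1) + 1 + k = c + 1 + k from by omega, hsym, e4]
    have e5 : ((b:ℚ)+1) * ((m:ℚ)+1) + 1 + (k:ℚ) = (((c + m + 1 + k) + 1 : ℕ) : ℚ) := by
      push_cast [hc]; ring
    rw [e5]
    have hid : ((c + m + 1 + k) + 1) * (c + m + 1 + k).choose m
        = ((c + m + 1 + k) + 1).choose (m+1) * (m+1) := Nat.add_one_mul_choose_eq _ _
    have hidq : (((c + m + 1 + k) + 1 : ℕ) : ℚ) * ((c + m + 1 + k).choose m : ℚ)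
        = (((c + m + 1 + k) + 1).choose (m+1) : ℚ) * ((m:ℚ)+1) := by exact_mod_cast hid
    have hN : (((c + m + 1 + k) + 1 : ℕ) : ℚ) ≠ 0 := by positivity
    have hn0 : ((m : ℚ) + 1) ≠ 0 := by positivity
    rw [mul_one_div, div_eq_div_iff hN hn0]
    linear_combination (-((-1:ℚ)^k * (((m+1).choose k : ℕ) : ℚ))) * hidq
  rw [Finset.sum_congr rfl hrw, ← Finset.sum_mul]
  rw [key (m+1) (b*(m+1)+m+1) m (by omega)]
  simp
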